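/- Let X be a random vector in R^d with E[X] = x, and let X̃ = clip_λ(X) where clip_λ(v) = min{1, λ/‖v‖}·v for v ≠ 0 and clip_λ(0) = 0. If ‖x‖ ≤ λ/2, then E[‖X̃ − x‖²] ≤ 10·E[‖X − x‖²]. -/

import Mathlib

open MeasureTheory
open scoped Classical

noncomputable def clip {E : Type*} [NormedAddCommGroup E] [NormedSpace ℝ E]
    (lam : ℝ) (v : E) : E :=
  if v = 0 then 0 else (min 1 (lam / ‖v‖)) • v

lemma clip_key {E : Type*} [NormedAddCommGroup E] [NormedSpace ℝ E]
    (lam : ℝ) (hlam : 0 < lam) (x v : E) (hx : ‖x‖ ≤ lam / 2) :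
    ‖clip lam v - x‖ ≤ 2 * ‖v - x‖ := by
  unfold clip
  split_ifs with h
  · subst h
    simp only [zero_sub, norm_neg, zero_sub, norm_neg]
    linarith [norm_nonneg x]
  · have hv : (0:ℝ) < ‖v‖ := norm_pos_iff.mpr h
    by_cases hle : ‖v‖ ≤ lam
    · have : min 1 (lam / ‖v‖) = 1 := by
        rw [min_eq_left]
        rw [le_div_iff₀ hv]; linarith
      rw [this, one_smul]
      linarith [norm_nonneg (v - x)]
    · push_neg at hle
      have hmin : min 1 (lam / ‖v‖) = lam / ‖v‖ := by
        rw [min_eq_right]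
        rw [div_le_one hv]; linarith
      rw [hmin]
      have h1 : ‖(lam / ‖v‖) • v - v‖ = ‖v‖ - lam := by
        have : (lam / ‖v‖) • v - v = ((lam / ‖v‖) - 1) • v := by
          rw [sub_smul, one_smul]
        rw [this, norm_smul, Real.norm_eq_abs, abs_of_nonpos (by
          rw [sub_nonpos, div_le_one hv]; linarith)]
        field_simp
        ring
      have h2 : ‖v‖ - lam ≤ ‖v - x‖ := by
        have := norm_sub_norm_le v x
        have : ‖v‖ - ‖x‖ ≤ ‖v - x‖ := this
        linarith
      calc ‖(lam / ‖v‖) • v - x‖ ≤ ‖(lam / ‖v‖) • v - v‖ + ‖v - x‖ :=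
            norm_sub_le_norm_sub_add_norm_sub _ _ _
        _ ≤ 2 * ‖v - x‖ := by rw [h1]; linarith

theorem stmt_0 {d : ℕ} {Ω : Type*} [MeasurableSpace Ω]
    (μ : Measure Ω) [IsProbabilityMeasure μ]
    (X : Ω → EuclideanSpace ℝ (Fin d)) (x : EuclideanSpace ℝ (Fin d)) (lam : ℝ)
    (hlam : 0 < lam)
    (hX : Integrable X μ)
    (hX2 : Integrable (fun ω => ‖X ω - x‖ ^ 2) μ)
    (hmean : ∫ ω, X ω ∂μ = x)
    (hx : ‖x‖ ≤ lam / 2) :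
    ∫ ω, ‖clip lam (X ω) - x‖ ^ 2 ∂μ ≤ 10 * ∫ ω, ‖X ω - x‖ ^ 2 ∂μ := by
  have hpt : ∀ ω, ‖clip lam (X ω) - x‖ ^ 2 ≤ 10 * ‖X ω - x‖ ^ 2 := by
    intro ω
    have h := clip_key lam hlam x (X ω) hx
    nlinarith [norm_nonneg (clip lam (X ω) - x), norm_nonneg (X ω - x)]
  calc ∫ ω, ‖clip lam (X ω) - x‖ ^ 2 ∂μ
      ≤ ∫ ω, 10 * ‖X ω - x‖ ^ 2 ∂μ := by
        apply integral_mono_of_nonneg (ae_of_all _ fun ω => sq_nonneg _)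
          (hX2.const_mul 10) (ae_of_all _ hpt)
    _ = 10 * ∫ ω, ‖X ω - x‖ ^ 2 ∂μ := integral_const_mul 10 _
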